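/- Suppose g : E → ℝ → E satisfies the one-sided Lipschitz condition with rate γ̄ : ℝ → ℝ (with respect to ‖·‖_P) on [t₀, ∞), where γ̄ is integrable on compact subintervals of [t₀, ∞). Let x, y : ℝ → E be differentiable curves with x'(t) = g (x t) t and y'(t) = g (y t) t for all t ≥ t₀. Then for every t ≥ t₀, ‖x t − y t‖_P ≤ Real.exp (−∫ s in t₀..t, γ̄ s) · ‖x t₀ − y t₀‖_P. -/

import Mathlib

open MeasureTheory

/-- Weighted inner product `⟪u, P.mulVec v⟫` on Euclidean space. -/
noncomputable def wip {n : ℕ} (P : Matrix (Fin n) (Fin n) ℝ)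
    (u v : EuclideanSpace ℝ (Fin n)) : ℝ :=
  ∑ i, u i * P.mulVec (fun j => v j) i

/-- Weighted norm `‖u‖_P = √⟪u, u⟫_P`. -/
noncomputable def wnorm {n : ℕ} (P : Matrix (Fin n) (Fin n) ℝ)
    (u : EuclideanSpace ℝ (Fin n)) : ℝ :=
  Real.sqrt (wip P u u)

lemma wip_self_nonneg {n : ℕ} {P : Matrix (Fin n) (Fin n) ℝ} (hP : P.PosDef)
    (u : EuclideanSpace ℝ (Fin n)) : 0 ≤ wip P u u := by
  have := hP.posSemidef.re_dotProduct_nonneg (fun i => u i)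
  simpa [wip, dotProduct] using this

lemma wip_comm {n : ℕ} {P : Matrix (Fin n) (Fin n) ℝ} (hP : P.IsSymm)
    (u v : EuclideanSpace ℝ (Fin n)) : wip P u v = wip P v u := by
  simp only [wip, Matrix.mulVec, dotProduct, Finset.mul_sum]
  rw [Finset.sum_comm]
  refine Finset.sum_congr rfl fun j _ => Finset.sum_congr rfl fun i _ => ?_
  rw [hP.apply j i]
  ring

lemma wnorm_sq {n : ℕ} {P : Matrix (Fin n) (Fin n) ℝ} (hP : P.PosDef)
    (u : EuclideanSpace ℝ (Fin n)) : wnorm P u ^ 2 = wip P u u :=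
  Real.sq_sqrt (wip_self_nonneg hP u)

lemma hasDerivAt_wip_self {n : ℕ} {P : Matrix (Fin n) (Fin n) ℝ} (hP : P.IsSymm)
    {z : ℝ → EuclideanSpace ℝ (Fin n)} {w : EuclideanSpace ℝ (Fin n)} {t : ℝ}
    (hz : HasDerivAt z w t) :
    HasDerivAt (fun s => wip P (z s) (z s)) (2 * wip P (z t) w) t := by
  have hcoord : ∀ i, HasDerivAt (fun s => z s i) (w i) t := fun i =>
    (EuclideanSpace.proj (𝕜 := ℝ) i).hasFDerivAt.comp_hasDerivAt t hz
  have key : HasDerivAt (fun s => ∑ i, z s i * ∑ j, P i j * z s j)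
      (∑ i, (w i * ∑ j, P i j * z t j + z t i * ∑ j, P i j * w j)) t := by
    refine HasDerivAt.fun_sum fun i _ => ?_
    exact (hcoord i).mul (HasDerivAt.fun_sum fun j _ => (hcoord j).const_mul (P i j))
  have e1 : ∀ s, wip P (z s) (z s) = ∑ i, z s i * ∑ j, P i j * z s j := by
    intro s; simp [wip, Matrix.mulVec, dotProduct]
  have e2 : (2 : ℝ) * wip P (z t) w
      = ∑ i, (w i * ∑ j, P i j * z t j + z t i * ∑ j, P i j * w j) := by
    have c1 : wip P (z t) w = ∑ i, w i * ∑ j, P i j * z t j := by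
      rw [wip_comm hP]
      simp [wip, Matrix.mulVec, dotProduct]
    have c2 : wip P (z t) w = ∑ i, z t i * ∑ j, P i j * w j := by
      simp [wip, Matrix.mulVec, dotProduct]
    rw [Finset.sum_add_distrib, ← c1, ← c2]
    ring
  rw [e2]
  simpa only [e1] using key

theorem stmt_0 {n : ℕ} (P : Matrix (Fin n) (Fin n) ℝ)
    (hPsymm : P.IsSymm) (hPpos : P.PosDef)
    (g : EuclideanSpace ℝ (Fin n) → ℝ → EuclideanSpace ℝ (Fin n))
    (gam : ℝ → ℝ) (t₀ : ℝ)
    (hInt : ∀ a b : ℝ, t₀ ≤ a → a ≤ b → IntervalIntegrable gam volume a b)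
    (hOSL : ∀ x y : EuclideanSpace ℝ (Fin n), ∀ t : ℝ, t₀ ≤ t →
      wip P (x - y) (g x t - g y t) ≤ -gam t * (wnorm P (x - y)) ^ 2)
    (x y : ℝ → EuclideanSpace ℝ (Fin n))
    (hx : ∀ t : ℝ, t₀ ≤ t → HasDerivAt x (g (x t) t) t)
    (hy : ∀ t : ℝ, t₀ ≤ t → HasDerivAt y (g (y t) t) t) :
    ∀ t : ℝ, t₀ ≤ t →
      wnorm P (x t - y t) ≤ Real.exp (-∫ s in t₀..t, gam s) * wnorm P (x t₀ - y t₀) := by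
  intro T hT
  set z : ℝ → EuclideanSpace ℝ (Fin n) := fun t => x t - y t with hzdef
  set V : ℝ → ℝ := fun t => wip P (z t) (z t) with hVdef
  have hVnonneg : ∀ t, 0 ≤ V t := fun t => wip_self_nonneg hPpos (z t)
  set V' : ℝ → ℝ := fun t => 2 * wip P (z t) (g (x t) t - g (y t) t) with hV'def
  have hVd : ∀ t, t₀ ≤ t → HasDerivAt V (V' t) t := fun t ht =>
    hasDerivAt_wip_self hPsymm ((hx t ht).sub (hy t ht))
  have hVd_le : ∀ t, t₀ ≤ t → V' t ≤ -2 * gam t * V t := by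
    intro t ht
    have h := hOSL (x t) (y t) t ht
    rw [wnorm_sq hPpos] at h
    have h2 : wip P (z t) (g (x t) t - g (y t) t) ≤ -gam t * V t := h
    show 2 * wip P (z t) (g (x t) t - g (y t) t) ≤ -2 * gam t * V t
    nlinarith [h2]
  have hVcont : ∀ a b, t₀ ≤ a → ContinuousOn V (Set.Icc a b) := by
    intro a b ha
    exact fun s hs => ((hVd s (ha.trans hs.1)).continuousAt).continuousWithinAt
  -- key comparison on intervals where V is positive
  have key : ∀ a b, t₀ ≤ a → a ≤ b → (∀ s ∈ Set.Icc a b, 0 < V s) →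
      V b ≤ V a * Real.exp (∫ s in a..b, -2 * gam s) := by
    intro a b ha hab hpos
    have hInt2 : IntervalIntegrable (fun s => -2 * gam s) volume a b :=
      (hInt a b ha hab).const_mul (-2)
    have hIntOn : IntegrableOn (fun s => -2 * gam s) (Set.Icc a b) volume := by
      rw [integrableOn_Icc_iff_integrableOn_Ioc]
      simpa [intervalIntegrable_iff_integrableOn_Ioc_of_le hab] using hInt2
    have hlog : Real.log (V b) - Real.log (V a) ≤ ∫ s in a..b, -2 * gam s := by
      refine intervalIntegral.sub_le_integral_of_hasDeriv_right_of_le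
        (g := fun s => Real.log (V s)) (g' := fun s => V' s / V s)
        (φ := fun s => -2 * gam s) hab ?_ ?_ hIntOn ?_
      · exact (hVcont a b ha).log (fun s hs => (hpos s hs).ne')
      · intro s hs
        have hds : HasDerivAt (fun u => Real.log (V u)) (V' s / V s) s :=
          (hVd s (ha.trans hs.1.le)).log (hpos s ⟨hs.1.le, hs.2.le⟩).ne'
        exact hds.hasDerivWithinAt
      · intro s hs
        have hp := hpos s ⟨hs.1.le, hs.2.le⟩
        rw [div_le_iff₀ hp]
        exact hVd_le s (ha.trans hs.1.le)
    have hb : V b = Real.exp (Real.log (V b)) := (Real.exp_log (hpos b ⟨hab, le_rfl⟩)).symm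
    have ha' : V a = Real.exp (Real.log (V a)) := (Real.exp_log (hpos a ⟨le_rfl, hab⟩)).symm
    calc V b = Real.exp (Real.log (V b)) := hb
      _ ≤ Real.exp (Real.log (V a) + ∫ s in a..b, -2 * gam s) :=
          Real.exp_le_exp.2 (by linarith)
      _ = V a * Real.exp (∫ s in a..b, -2 * gam s) := by
          rw [Real.exp_add, ← ha']
  -- finishing algebra from the squared bound
  have finish : V T ≤ V t₀ * Real.exp (∫ s in t₀..T, -2 * gam s) →
      wnorm P (x T - y T) ≤ Real.exp (-∫ s in t₀..T, gam s) * wnorm P (x t₀ - y t₀) := by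
    intro hVT
    have hE : (∫ s in t₀..T, -2 * gam s) = -2 * ∫ s in t₀..T, gam s := by
      rw [intervalIntegral.integral_const_mul]
    have h1 : wnorm P (x T - y T) = Real.sqrt (V T) := rfl
    have h2 : wnorm P (x t₀ - y t₀) = Real.sqrt (V t₀) := rfl
    rw [h1, h2]
    have := Real.sqrt_le_sqrt hVT
    refine this.trans (le_of_eq ?_)
    rw [Real.sqrt_mul (hVnonneg t₀), hE]
    rw [show (-2 : ℝ) * (∫ s in t₀..T, gam s)
        = (-∫ s in t₀..T, gam s) + (-∫ s in t₀..T, gam s) by ring]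
    rw [Real.exp_add, Real.sqrt_mul_self (Real.exp_nonneg _)]
    ring
  by_cases hzero : ∃ s ∈ Set.Icc t₀ T, V s = 0
  · -- then V T = 0
    have hVT : V T = 0 := by
      by_contra hVT0
      have hVTpos : 0 < V T := lt_of_le_of_ne (hVnonneg T) (Ne.symm hVT0)
      set S : Set ℝ := {s ∈ Set.Icc t₀ T | V s = 0} with hSdef
      obtain ⟨s₀, hs₀, hVs₀⟩ := hzero
      have hSne : S.Nonempty := ⟨s₀, hs₀, hVs₀⟩
      have hSbdd : BddAbove S := ⟨T, fun u hu => hu.1.2⟩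
      have hSclosed : IsClosed S := by
        have : S = Set.Icc t₀ T ∩ V ⁻¹' {0} := by
          ext u; simp [hSdef]
        rw [this]
        exact (hVcont t₀ T le_rfl).preimage_isClosed_of_isClosed isClosed_Icc
          isClosed_singleton
      set c := sSup S with hcdef
      have hcS : c ∈ S := hSclosed.csSup_mem hSne hSbdd
      have hct₀ : t₀ ≤ c := hcS.1.1
      have hcT : c ≤ T := hcS.1.2
      have hVc0 : V c = 0 := hcS.2
      have hcltT : c < T := lt_of_le_of_ne hcT (fun h => hVT0 (h ▸ hVc0))
      have hposIoc : ∀ u ∈ Set.Ioc c T, 0 < V u := by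
        intro u hu
        rcases (hVnonneg u).lt_or_eq with h | h
        · exact h
        · exact absurd (le_csSup hSbdd ⟨⟨hct₀.trans hu.1.le, hu.2⟩, h.symm⟩)
            (not_le.2 hu.1)
      -- uniform bound for the exponential factor
      set C : ℝ := (∫ s in c..T, -2 * gam s) + ∫ s in t₀..T, 2 * |gam s| with hCdef
      have habs : IntervalIntegrable (fun s => 2 * |gam s|) volume t₀ T :=
        ((hInt t₀ T le_rfl hT).abs).const_mul 2
      have hboundexp : ∀ a ∈ Set.Ioc c T, (∫ s in a..T, -2 * gam s) ≤ C := by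
        intro a ha
        have hIca : IntervalIntegrable (fun s => -2 * gam s) volume c a :=
          (hInt c a hct₀ ha.1.le).const_mul (-2)
        have hsplit : (∫ s in a..T, -2 * gam s)
            = (∫ s in c..T, -2 * gam s) - ∫ s in c..a, -2 * gam s := by
          rw [eq_sub_iff_add_eq]
          rw [add_comm]
          exact intervalIntegral.integral_add_adjacent_intervals hIca
            ((hInt a T (hct₀.trans ha.1.le) ha.2).const_mul (-2))
        rw [hsplit, hCdef]
        have h1 : -(∫ s in c..a, -2 * gam s) ≤ ∫ s in c..a, 2 * |gam s| := by
          rw [← intervalIntegral.integral_neg]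
          refine intervalIntegral.integral_mono_on ha.1.le (hIca.neg) ?_ ?_
          · exact (((hInt c a hct₀ ha.1.le).abs).const_mul 2)
          · intro s _
            simp only [neg_mul, neg_neg]
            have := le_abs_self (gam s)
            nlinarith [le_abs_self (gam s)]
        have h2 : (∫ s in c..a, 2 * |gam s|) ≤ ∫ s in t₀..T, 2 * |gam s| := by
          refine intervalIntegral.integral_mono_interval hct₀ ha.1.le ha.2 ?_ habs
          filter_upwards with s
          positivity
        linarith
      have hVTle : ∀ a ∈ Set.Ioc c T, V T ≤ V a * Real.exp C := by
        intro a ha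
        have hk := key a T (hct₀.trans ha.1.le) ha.2
          (fun s hs => hposIoc s ⟨lt_of_lt_of_le ha.1 hs.1, hs.2⟩)
        refine hk.trans ?_
        exact mul_le_mul_of_nonneg_left (Real.exp_le_exp.2 (hboundexp a ha))
          (hVnonneg a)
      have htendsto : Filter.Tendsto (fun a => V a * Real.exp C)
          (nhdsWithin c (Set.Ioi c)) (nhds (V c * Real.exp C)) := by
        exact ((hVd c hct₀).continuousAt.continuousWithinAt.tendsto).mul
          tendsto_const_nhds
      have hev : ∀ᶠ a in nhdsWithin c (Set.Ioi c), V T ≤ V a * Real.exp C := by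
        filter_upwards [Ioc_mem_nhdsGT_of_mem ⟨le_rfl, hcltT⟩] with a ha
        exact hVTle a ha
      have := ge_of_tendsto htendsto hev
      rw [hVc0, zero_mul] at this
      linarith
    have h0 : wnorm P (x T - y T) = 0 := by
      show Real.sqrt (V T) = 0
      rw [hVT, Real.sqrt_zero]
    rw [h0]
    exact mul_nonneg (Real.exp_nonneg _) (Real.sqrt_nonneg _)
  · push_neg at hzero
    have hpos : ∀ s ∈ Set.Icc t₀ T, 0 < V s := fun s hs =>
      lt_of_le_of_ne (hVnonneg s) (Ne.symm (hzero s hs))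
    exact finish (key t₀ T le_rfl hT hpos)
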